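/- For every integer d > 0, ∑_{J ⊆ {1,...,d}} [ ∏_{i=1}^{m+1} (n_i − 1) ] · [ ∑_{i=1}^{m+1} n_i(n_i − 3)/2 ] · U_J = 0, where for each J the quantities m, n_1, ..., n_{m+1} are the block data of J and U_J = (d+1)! · n_{m+1} / (n_1! · n_2! ⋯ n_{m+1}!). -/

import Mathlib

open Finset Polynomial

/-- Block sizes of an index set `J ⊆,{1,…,d}`: differences of consecutive elements of
`{0} ∪ J ∪ {d+2}` in increasing order. -/
def blockSizes (d : ℕ) (J : Finset ℕ) : List ℕ :=
  let L := (insert 0 (insert (d + 2) J)).sort (· ≤ ·)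
  L.tail.zipWith (· - ·) L

/-- The rank of a set in a matroid: the supremum of cardinalities of independent subsets. -/
noncomputable def mrank {α : Type*} (M : Matroid α) (X : Set α) : ℕ :=
  sSup {n : ℕ | ∃ I, M.Indep I ∧ I ⊆ X ∧ I.ncard = n}

/-- A loopless matroid: every singleton of the ground set is independent. -/
def MLoopless {α : Type*} (M : Matroid α) : Prop := ∀ e ∈ M.E, M.Indep {e}

/-- `flagCount M J` : the number of chains of flats of `M` whose ranks are exactly
the elements of `J`, in increasing order. -/
noncomputable def flagCount {α : Type*} (M : Matroid α) (J : Finset ℕ) : ℕ :=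
  Nat.card {F : J → Set α // StrictMono F ∧ ∀ j : J, M.IsFlat (F j) ∧ mrank M (F j) = (j : ℕ)}

/-- The Chow polynomial of a matroid of rank `d+1`, via the Feichtner–Yuzvinsky
flag formula. -/
noncomputable def chowPoly {α : Type*} (M : Matroid α) (d : ℕ) : Polynomial ℝ :=
  ∑ J ∈ (Finset.Icc 1 d).powerset,
    (flagCount M J : ℝ) •
      ((X : Polynomial ℝ) ^ J.card *
        ((blockSizes d J).map (fun n => ∑ j ∈ Finset.range (n - 1), (X : Polynomial ℝ) ^ j)).prod)

/-- The number of descents of a permutation of `Fin n`. -/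
def descentCount {n : ℕ} (σ : Equiv.Perm (Fin n)) : ℕ :=
  (Finset.univ.filter fun i : Fin n =>
    ∃ h : (i : ℕ) + 1 < n, σ ⟨(i : ℕ) + 1, h⟩ < σ i).card

/-- The Eulerian number `A(n,k)`: the number of permutations of `{1,…,n}` with
exactly `k` descents. -/
def eulerian (n k : ℕ) : ℕ :=
  (Finset.univ.filter fun σ : Equiv.Perm (Fin n) => descentCount σ = k).card

/-- `U_J = (d+1)! · n_{m+1} / (n_1! ⋯ n_{m+1}!)`, the number of chains of flats of ranks `J`
in the Boolean matroid of rank `d+1`. -/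
noncomputable def boolFlagCount (d : ℕ) (J : Finset ℕ) : ℚ :=
  (Nat.factorial (d + 1) : ℚ) * ((blockSizes d J).getLastD 1 : ℚ) /
    (((blockSizes d J).map Nat.factorial).prod : ℚ)

def bdiffs (l : List ℕ) : List ℕ := l.tail.zipWith (· - ·) l

lemma blockSizes_eq (d : ℕ) (J : Finset ℕ) :
    blockSizes d J = bdiffs ((insert 0 (insert (d + 2) J)).sort (· ≤ ·)) := rfl

lemma bdiffs_cons₂ (a b : ℕ) (t : List ℕ) :
    bdiffs (a :: b :: t) = (b - a) :: bdiffs (b :: t) := rfl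

lemma bdiffs_map_add (j : ℕ) : ∀ l : List ℕ, bdiffs (l.map (· + j)) = bdiffs l
  | [] => rfl
  | [_] => rfl
  | a :: b :: t => by
      have := bdiffs_map_add j (b :: t)
      simp only [List.map_cons] at this ⊢
      rw [bdiffs_cons₂, bdiffs_cons₂, Nat.add_sub_add_right, this]

lemma sort_image_add (j : ℕ) (s : Finset ℕ) :
    (s.image (· + j)).sort (· ≤ ·) = (s.sort (· ≤ ·)).map (· + j) := by
  have hinj : Function.Injective (· + j : ℕ → ℕ) := add_left_injective j
  have h1 : ((s.sort (· ≤ ·)).map (· + j)).toFinset = s.image (· + j) := by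
    ext x; simp
  rw [← h1, List.toFinset_sort]
  · refine List.Pairwise.map _ (fun a b h => ?_) (Finset.pairwise_sort _ _)
    omega
  · exact (Finset.sort_nodup _ _).map hinj

lemma blockSizes_empty (e : ℕ) : blockSizes e ∅ = [e + 2] := by
  rw [blockSizes_eq]
  have h : (insert 0 (insert (e + 2) (∅ : Finset ℕ))).sort (· ≤ ·) = [0, e + 2] := by
    rw [Finset.sort_insert _ (by intro b hb; simp at hb; omega) (by simp)]
    simp
  rw [h]; simp [bdiffs]

lemma sort_insert_zero (e : ℕ) (J : Finset ℕ) (hJ : J ⊆ Icc 1 e) :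
    (insert 0 (insert (e + 2) J)).sort (· ≤ ·) =
      0 :: (insert (e + 2) J).sort (· ≤ ·) := by
  refine Finset.sort_insert _ (fun b hb => Nat.zero_le b) ?_
  simp only [Finset.mem_insert]
  rintro (h | h)
  · omega
  · have := hJ h; simp at this

lemma sort_nonempty_insert (s : Finset ℕ) (a : ℕ) :
    ∃ x t, (insert a s).sort (· ≤ ·) = x :: t := by
  rcases hl : (insert a s).sort (· ≤ ·) with _ | ⟨x, t⟩
  · exfalso
    have h2 := congrArg List.length hl
    simp only [Finset.length_sort, List.length_nil, Finset.card_eq_zero] at h2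
    exact Finset.insert_ne_empty _ _ h2
  · exact ⟨x, t, rfl⟩

lemma blockSizes_ne_nil (e : ℕ) (J : Finset ℕ) (hJ : J ⊆ Icc 1 e) :
    blockSizes e J ≠ [] := by
  rw [blockSizes_eq, sort_insert_zero e J hJ]
  obtain ⟨x, t, hl⟩ := sort_nonempty_insert J (e + 2)
  rw [hl, bdiffs_cons₂]
  simp

/-- Key decomposition: prepending the minimum block. -/
lemma blockSizes_insert_min (e j : ℕ) (hj1 : 1 ≤ j) (hje : j ≤ e)
    (K : Finset ℕ) (hK : K ⊆ Icc 1 (e - j)) :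
    blockSizes e (insert j (K.image (· + j))) = j :: blockSizes (e - j) K := by
  have hset : insert 0 (insert (e + 2) (insert j (K.image (· + j))))
      = insert 0 ((insert 0 (insert (e - j + 2) K)).image (· + j)) := by
    rw [Finset.image_insert, Finset.image_insert]
    have h3 : e - j + 2 + j = e + 2 := by omega
    rw [h3]
    ext x; simp; tauto
  rw [blockSizes_eq, hset]
  have h0 : (insert 0 ((insert 0 (insert (e - j + 2) K)).image (· + j))).sort (· ≤ ·)
      = 0 :: ((insert 0 (insert (e - j + 2) K)).image (· + j)).sort (· ≤ ·) := by
    refine Finset.sort_insert _ (fun b hb => Nat.zero_le b) ?_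
    simp only [Finset.mem_image]
    rintro ⟨x, hx, hx0⟩; omega
  rw [h0, sort_image_add, sort_insert_zero _ _ hK]
  obtain ⟨a, t, hl⟩ := sort_nonempty_insert K (e - j + 2)
  rw [hl]
  have key : bdiffs (0 :: List.map (· + j) (0 :: a :: t)) = j :: bdiffs (0 :: a :: t) := by
    have h2 := bdiffs_map_add j (0 :: a :: t)
    simp only [List.map_cons, Nat.zero_add] at h2 ⊢
    rw [bdiffs_cons₂, Nat.sub_zero]
    exact congrArg (j :: ·) h2
  rw [key, blockSizes_eq, sort_insert_zero _ _ hK, hl]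
lemma TS_rec (F : List ℕ → ℚ) (e : ℕ) :
    ∑ J ∈ (Icc 1 e).powerset, F (blockSizes e J)
      = F [e + 2] +
        ∑ j ∈ Icc 1 e, ∑ K ∈ (Icc 1 (e - j)).powerset, F (j :: blockSizes (e - j) K) := by
  have hemp : (∅ : Finset ℕ) ∈ (Icc 1 e).powerset := Finset.empty_mem_powerset _
  rw [← Finset.add_sum_erase _ _ hemp, blockSizes_empty]
  congr 1
  rw [show (∑ j ∈ Icc 1 e, ∑ K ∈ (Icc 1 (e - j)).powerset, F (j :: blockSizes (e - j) K)) = ∑ p ∈ (Icc 1 e).sigma (fun j => (Icc 1 (e - j)).powerset), F (p.1 :: blockSizes (e - p.1) p.2) from (Finset.sum_sigma (Icc 1 e) (fun j => (Icc 1 (e - j)).powerset) (fun p => F (p.1 :: blockSizes (e - p.1) p.2))).symm]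
  refine Eq.symm (Finset.sum_bij (fun (p : (_ : ℕ) × Finset ℕ) _ => insert p.1 (p.2.image (· + p.1))) ?_ ?_ ?_ ?_)
  · rintro ⟨j, K⟩ hp
    simp only [Finset.mem_sigma, Finset.mem_Icc, Finset.mem_powerset] at hp
    obtain ⟨⟨hj1, hje⟩, hK⟩ := hp
    rw [Finset.mem_erase]
    constructor
    · exact Finset.insert_ne_empty _ _
    · rw [Finset.mem_powerset]
      intro x hx
      rcases Finset.mem_insert.mp hx with rfl | hx
      · simp only [Finset.mem_Icc]; omega
      · obtain ⟨y, hy, rfl⟩ := Finset.mem_image.mp hx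
        have := hK hy
        simp only [Finset.mem_Icc] at this ⊢
        omega
  · rintro ⟨j, K⟩ hp ⟨j', K'⟩ hp' heq
    dsimp only at heq
    simp only [Finset.mem_sigma, Finset.mem_Icc, Finset.mem_powerset] at hp hp'
    obtain ⟨⟨hj1, hje⟩, hK⟩ := hp
    obtain ⟨⟨hj1', hje'⟩, hK'⟩ := hp'
    have hmemK : ∀ y ∈ K, 1 ≤ y := fun y hy => (Finset.mem_Icc.mp (hK hy)).1
    have hmemK' : ∀ y ∈ K', 1 ≤ y := fun y hy => (Finset.mem_Icc.mp (hK' hy)).1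
    have hjj : j = j' := by
      have h1 : j ∈ insert j' (K'.image (· + j')) := heq ▸ Finset.mem_insert_self _ _
      have h2 : j' ∈ insert j (K.image (· + j)) := heq ▸ Finset.mem_insert_self _ _
      rcases Finset.mem_insert.mp h1 with h | h
      · exact h
      · obtain ⟨y, hy, hyy⟩ := Finset.mem_image.mp h
        rcases Finset.mem_insert.mp h2 with h' | h'
        · exact h'.symm
        · obtain ⟨y', hy', hyy'⟩ := Finset.mem_image.mp h'
          have := hmemK' y hy; have := hmemK y' hy'
          omega
    subst hjj
    have hKK : K = K' := by
      ext x
      constructor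
      · intro hx
        have h1 : x + j ∈ insert j (K'.image (· + j)) :=
          heq ▸ Finset.mem_insert_of_mem (Finset.mem_image_of_mem _ hx)
        rcases Finset.mem_insert.mp h1 with h | h
        · have := hmemK x hx; omega
        · obtain ⟨y, hy, hyy⟩ := Finset.mem_image.mp h
          have : y = x := by omega
          rwa [← this]
      · intro hx
        have h1 : x + j ∈ insert j (K.image (· + j)) :=
          heq.symm ▸ Finset.mem_insert_of_mem (Finset.mem_image_of_mem _ hx)
        rcases Finset.mem_insert.mp h1 with h | h
        · have := hmemK' x hx; omega
        · obtain ⟨y, hy, hyy⟩ := Finset.mem_image.mp h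
          have : y = x := by omega
          rwa [← this]
    subst hKK
    rfl
  · intro J hJ
    rw [Finset.mem_erase, Finset.mem_powerset] at hJ
    obtain ⟨hJne, hJsub⟩ := hJ
    have hne : J.Nonempty := Finset.nonempty_iff_ne_empty.mpr hJne
    set j := J.min' hne with hj
    have hjJ : j ∈ J := J.min'_mem hne
    have hjIcc := hJsub hjJ
    rw [Finset.mem_Icc] at hjIcc
    refine ⟨⟨j, (J.erase j).image (· - j)⟩, ?_, ?_⟩
    · simp only [Finset.mem_sigma, Finset.mem_Icc, Finset.mem_powerset]
      refine ⟨hjIcc, ?_⟩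
      intro x hx
      obtain ⟨y, hy, rfl⟩ := Finset.mem_image.mp hx
      rw [Finset.mem_erase] at hy
      have h1 := J.min'_le y hy.2
      have h2 := hJsub hy.2
      rw [Finset.mem_Icc] at h2 ⊢
      have : j ≠ y := fun h => hy.1 h.symm
      omega
    · ext x
      simp only [Finset.mem_insert, Finset.mem_image, Finset.mem_erase]
      constructor
      · rintro (rfl | ⟨y, ⟨z, ⟨hz1, hz2⟩, rfl⟩, rfl⟩)
        · exact hjJ
        · have h1 := J.min'_le z hz2
          have h2 : z - j + j = z := by omega
          rwa [h2]
      · intro hx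
        by_cases hxj : x = j
        · exact Or.inl hxj
        · refine Or.inr ⟨x - j, ⟨x, ⟨hxj, hx⟩, rfl⟩, ?_⟩
          have := J.min'_le x hx
          omega
  · rintro ⟨j, K⟩ hp
    simp only [Finset.mem_sigma, Finset.mem_Icc, Finset.mem_powerset] at hp
    obtain ⟨⟨hj1, hje⟩, hK⟩ := hp
    exact (congrArg F (blockSizes_insert_min e j hj1 hje K hK)).symm

lemma tele1 : ∀ M : ℕ, ∑ j ∈ Icc 1 M, ((j : ℚ) - 1) / (Nat.factorial j : ℚ)
    = 1 - 1 / (Nat.factorial M : ℚ)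
  | 0 => by simp
  | (M + 1) => by
    rw [Finset.sum_Icc_succ_top (by omega), tele1 M]
    have h1 : (Nat.factorial M : ℚ) ≠ 0 := Nat.cast_ne_zero.mpr (Nat.factorial_ne_zero M)
    have h2 : ((M : ℚ) + 1) ≠ 0 := by positivity
    push_cast [Nat.factorial_succ]
    field_simp
    ring

lemma tele2 : ∀ M : ℕ, ∑ j ∈ Icc 1 M, ((j : ℚ) - 1) / (Nat.factorial j : ℚ) * ((j : ℚ) * ((j : ℚ) - 3) / 2)
    = -(M : ℚ) * ((M : ℚ) - 1) / (2 * (Nat.factorial M : ℚ))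
  | 0 => by simp
  | (M + 1) => by
    rw [Finset.sum_Icc_succ_top (by omega), tele2 M]
    have h1 : (Nat.factorial M : ℚ) ≠ 0 := Nat.cast_ne_zero.mpr (Nat.factorial_ne_zero M)
    have h2 : ((M : ℚ) + 1) ≠ 0 := by positivity
    push_cast [Nat.factorial_succ]
    field_simp
    ring

noncomputable def Pw (l : List ℕ) : ℚ := (l.map fun n => (n : ℚ) - 1).prod
noncomputable def Qw (l : List ℕ) : ℚ := (l.map fun n => (n : ℚ) * ((n : ℚ) - 3) / 2).sum
noncomputable def Rw (l : List ℕ) : ℚ := ((l.map Nat.factorial).prod : ℕ)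
noncomputable def Lw (l : List ℕ) : ℚ := (l.getLastD 1 : ℕ)
noncomputable def Fbw (l : List ℕ) : ℚ := Pw l * Lw l / Rw l
noncomputable def Ftw (l : List ℕ) : ℚ := Pw l * Qw l * Lw l / Rw l

lemma Lw_cons (j : ℕ) {l : List ℕ} (h : l ≠ []) : Lw (j :: l) = Lw l := by
  obtain ⟨a, t, rfl⟩ := List.exists_cons_of_ne_nil h
  simp [Lw, List.getLastD]

lemma Pw_cons (j : ℕ) (l : List ℕ) : Pw (j :: l) = ((j : ℚ) - 1) * Pw l := by
  simp [Pw]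

lemma Qw_cons (j : ℕ) (l : List ℕ) : Qw (j :: l) = (j : ℚ) * ((j : ℚ) - 3) / 2 + Qw l := by
  simp [Qw]

lemma Rw_cons (j : ℕ) (l : List ℕ) : Rw (j :: l) = (Nat.factorial j : ℚ) * Rw l := by
  simp [Rw]

lemma Fbw_cons (j : ℕ) {l : List ℕ} (h : l ≠ []) :
    Fbw (j :: l) = ((j : ℚ) - 1) / (Nat.factorial j : ℚ) * Fbw l := by
  rw [Fbw, Fbw, Pw_cons, Rw_cons, Lw_cons j h]
  ring

lemma Ftw_cons (j : ℕ) {l : List ℕ} (h : l ≠ []) :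
    Ftw (j :: l) = ((j : ℚ) - 1) / (Nat.factorial j : ℚ) *
      (Ftw l + ((j : ℚ) * ((j : ℚ) - 3) / 2) * Fbw l) := by
  rw [Ftw, Ftw, Fbw, Pw_cons, Qw_cons, Rw_cons, Lw_cons j h]
  ring

lemma Bsum : ∀ e : ℕ, ∑ J ∈ (Icc 1 e).powerset, Fbw (blockSizes e J) = 1 := by
  intro e
  induction e using Nat.strong_induction_on with
  | _ e IH =>
  rw [TS_rec]
  have hfac : (Nat.factorial e : ℚ) ≠ 0 := Nat.cast_ne_zero.mpr (Nat.factorial_ne_zero e)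
  have h1 : Fbw [e + 2] = 1 / (Nat.factorial e : ℚ) := by
    simp only [Fbw, Pw, Lw, Rw, List.map_cons, List.map_nil, List.prod_cons, List.prod_nil,
      List.getLastD]
    simp only [List.getLast_singleton, List.pure_def, List.bind_eq_flatMap, List.flatMap_cons, List.flatMap_nil, List.append_nil, List.map_cons, List.map_nil, List.prod_cons, List.prod_nil, List.sum_cons, List.sum_nil]
    push_cast [Nat.factorial_succ]
    field_simp
    ring
  have h2 : ∀ j ∈ Icc 1 e,
      (∑ K ∈ (Icc 1 (e - j)).powerset, Fbw (j :: blockSizes (e - j) K))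
        = ((j : ℚ) - 1) / (Nat.factorial j : ℚ) := by
    intro j hj
    rw [Finset.mem_Icc] at hj
    rw [Finset.sum_congr rfl (fun K hK =>
      Fbw_cons j (blockSizes_ne_nil _ _ (Finset.mem_powerset.mp hK)))]
    rw [← Finset.mul_sum, IH (e - j) (by omega)]
    ring
  rw [Finset.sum_congr rfl h2, tele1, h1]
  ring

lemma Tsum : ∀ e : ℕ, ∑ J ∈ (Icc 1 e).powerset, Ftw (blockSizes e J)
    = if e = 0 then -1 else 0 := by
  intro e
  induction e using Nat.strong_induction_on with
  | _ e IH =>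
  rcases Nat.eq_zero_or_pos e with rfl | he
  · simp only [if_pos rfl]
    rw [show Icc 1 0 = (∅ : Finset ℕ) by rfl]
    rw [Finset.powerset_empty, Finset.sum_singleton, blockSizes_empty]
    norm_num [Ftw, Pw, Qw, Rw, Lw, List.getLastD, Nat.factorial]
  · rw [if_neg (by omega), TS_rec]
    have hfac : (Nat.factorial e : ℚ) ≠ 0 := Nat.cast_ne_zero.mpr (Nat.factorial_ne_zero e)
    have h2 : ∀ j ∈ Icc 1 e,
        (∑ K ∈ (Icc 1 (e - j)).powerset, Ftw (j :: blockSizes (e - j) K))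
          = (if j = e then -(((j : ℚ) - 1) / (Nat.factorial j : ℚ)) else 0)
            + ((j : ℚ) - 1) / (Nat.factorial j : ℚ) * ((j : ℚ) * ((j : ℚ) - 3) / 2) := by
      intro j hj
      rw [Finset.mem_Icc] at hj
      have step : ∀ K ∈ (Icc 1 (e - j)).powerset,
          Ftw (j :: blockSizes (e - j) K)
            = ((j : ℚ) - 1) / (Nat.factorial j : ℚ) *
              (Ftw (blockSizes (e - j) K)
                + ((j : ℚ) * ((j : ℚ) - 3) / 2) * Fbw (blockSizes (e - j) K)) := fun K hK =>
        Ftw_cons j (blockSizes_ne_nil _ _ (Finset.mem_powerset.mp hK))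
      rw [Finset.sum_congr rfl step, ← Finset.mul_sum, Finset.sum_add_distrib,
        ← Finset.mul_sum, IH (e - j) (by omega), Bsum (e - j)]
      rcases eq_or_ne j e with rfl | hne
      · rw [if_pos rfl, if_pos (by omega)]
        ring
      · rw [if_neg hne, if_neg (by omega)]
        ring
    rw [Finset.sum_congr rfl h2, Finset.sum_add_distrib, tele2,
      Finset.sum_ite_eq' (Icc 1 e) e (fun j => -(((j : ℚ) - 1) / (Nat.factorial j : ℚ))),
      if_pos (Finset.mem_Icc.mpr ⟨he, le_refl e⟩)]
    have h1 : Ftw [e + 2] = ((e : ℚ) + 2) * ((e : ℚ) - 1) / (2 * (Nat.factorial e : ℚ)) := by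
      rw [Ftw]
      simp only [Pw, Qw, Rw, Lw, List.map_cons, List.map_nil, List.prod_cons, List.prod_nil,
        List.sum_cons, List.sum_nil, List.getLastD]
      simp only [List.getLast_singleton, List.pure_def, List.bind_eq_flatMap, List.flatMap_cons, List.flatMap_nil, List.append_nil, List.map_cons, List.map_nil, List.prod_cons, List.prod_nil, List.sum_cons, List.sum_nil]
      push_cast [Nat.factorial_succ]
      have h2 : ((e : ℚ) + 1) ≠ 0 := by positivity
      have h3 : ((e : ℚ) + 2) ≠ 0 := by positivity
      field_simp
      ring
    rw [h1]
    field_simp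
    ring

/-- The Boolean identity:
`∑_{J ⊆ {1,…,d}} (∏ᵢ (nᵢ − 1)) · (∑ᵢ nᵢ(nᵢ−3)/2) · U_J = 0` for every `d > 0`. -/
theorem stmt18 (d : ℕ) (hd : 0 < d) :
    (∑ J ∈ (Finset.Icc 1 d).powerset,
        ((blockSizes d J).map fun n => (n : ℚ) - 1).prod *
          ((blockSizes d J).map fun n => (n : ℚ) * ((n : ℚ) - 3) / 2).sum *
          boolFlagCount d J) = 0 := by
  have h : ∀ J ∈ (Icc 1 d).powerset,
      ((blockSizes d J).map fun n => (n : ℚ) - 1).prod *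
          ((blockSizes d J).map fun n => (n : ℚ) * ((n : ℚ) - 3) / 2).sum *
          boolFlagCount d J
        = (Nat.factorial (d + 1) : ℚ) * Ftw (blockSizes d J) := by
    intro J _
    rw [boolFlagCount, Ftw, Pw, Qw, Rw, Lw]
    ring
  rw [Finset.sum_congr rfl h, ← Finset.mul_sum, Tsum d, if_neg (by omega), mul_zero]
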